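/- (Invertibility of the bias map, used in Algorithm 1) Let θ ≥ 1 and define g(d) = d + log( (2θ + (1 + θ²)·exp(−d)) / (1 + θ² + 2θ·exp(−d)) ) for d ∈ ℝ. Then g is strictly increasing on ℝ and is a bijection from ℝ onto ℝ; consequently for every real d̂ the nonlinear equation g(d) = d̂ has a unique real solution d. -/
import Mathlib


open Real

noncomputable def pBTT (θ d : ℝ) : ℝ := 1 / (1 + θ * Real.exp (-d))

noncomputable def tBTT (θ d : ℝ) : ℝ :=
  (θ ^ 2 - 1) * Real.exp d / ((Real.exp d + θ) * (θ * Real.exp d + 1))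

noncomputable def qBTT (θ d : ℝ) : ℝ := pBTT θ d + tBTT θ d / 2

noncomputable def logistic (x : ℝ) : ℝ := 1 / (1 + Real.exp (-x))

theorem bias_map_invertible (θ : ℝ) (hθ : 1 ≤ θ) :
    StrictMono (fun d : ℝ => d + Real.log ((2 * θ + (1 + θ ^ 2) * Real.exp (-d)) /
        (1 + θ ^ 2 + 2 * θ * Real.exp (-d)))) ∧
    Function.Bijective (fun d : ℝ => d + Real.log ((2 * θ + (1 + θ ^ 2) * Real.exp (-d)) /
        (1 + θ ^ 2 + 2 * θ * Real.exp (-d)))) ∧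
    (∀ dhat : ℝ, ∃! d : ℝ,
      d + Real.log ((2 * θ + (1 + θ ^ 2) * Real.exp (-d)) /
        (1 + θ ^ 2 + 2 * θ * Real.exp (-d))) = dhat) := by
  have ha : (0:ℝ) < 1 + θ ^ 2 := by nlinarith
  have hb : (0:ℝ) < 2 * θ := by linarith
  have hab : 2 * θ ≤ 1 + θ ^ 2 := by nlinarith [sq_nonneg (θ - 1)]
  set a : ℝ := 1 + θ ^ 2 with ha_def
  set b : ℝ := 2 * θ with hb_def
  set f : ℝ → ℝ := fun d => d + Real.log (b * Real.exp d + a) - Real.log (a * Real.exp d + b)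
    with hf_def
  have hp1 : ∀ d : ℝ, 0 < b * Real.exp d + a := fun d => by positivity
  have hp2 : ∀ d : ℝ, 0 < a * Real.exp d + b := fun d => by positivity
  have hfun : (fun d : ℝ => d + Real.log ((b + a * Real.exp (-d)) / (a + b * Real.exp (-d)))) = f := by
    funext d
    have he : Real.exp (-d) > 0 := Real.exp_pos _
    have hx : Real.exp (-d) * Real.exp d = 1 := by rw [← Real.exp_add]; simp
    have h1 : b + a * Real.exp (-d) = Real.exp (-d) * (b * Real.exp d + a) := by
      linear_combination (-b) * hx
    have h2 : a + b * Real.exp (-d) = Real.exp (-d) * (a * Real.exp d + b) := by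
      linear_combination (-a) * hx
    rw [h1, h2, Real.log_div (by positivity) (by positivity),
      Real.log_mul (ne_of_gt he) (ne_of_gt (hp1 d)),
      Real.log_mul (ne_of_gt he) (ne_of_gt (hp2 d))]
    simp [hf_def]
    ring
  have hderiv : ∀ d : ℝ, HasDerivAt f
      (1 + (b * Real.exp d) / (b * Real.exp d + a) - (a * Real.exp d) / (a * Real.exp d + b)) d := by
    intro d
    have h1 : HasDerivAt (fun d : ℝ => b * Real.exp d + a) (b * Real.exp d) d :=
      ((Real.hasDerivAt_exp d).const_mul b).add_const a
    have h2 : HasDerivAt (fun d : ℝ => a * Real.exp d + b) (a * Real.exp d) d :=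
      ((Real.hasDerivAt_exp d).const_mul a).add_const b
    exact ((hasDerivAt_id d).add (h1.log (ne_of_gt (hp1 d)))).sub (h2.log (ne_of_gt (hp2 d)))
  have hmono : StrictMono f := by
    apply strictMono_of_deriv_pos
    intro d
    rw [(hderiv d).deriv]
    have h1 : (a * Real.exp d) / (a * Real.exp d + b) < 1 := by
      rw [div_lt_one (hp2 d)]; linarith [hb]
    have h2 : 0 ≤ (b * Real.exp d) / (b * Real.exp d + a) := by positivity
    linarith
  have hcont : Continuous f := by
    apply Continuous.sub
    · exact continuous_id.add
        (((continuous_const.mul Real.continuous_exp).add continuous_const).log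
          (fun d => ne_of_gt (hp1 d)))
    · exact ((continuous_const.mul Real.continuous_exp).add continuous_const).log
        (fun d => ne_of_gt (hp2 d))
  have hlow : ∀ d : ℝ, d + (Real.log b - Real.log a) ≤ f d := by
    intro d
    have key : b * (a * Real.exp d + b) ≤ a * (b * Real.exp d + a) := by
      nlinarith [mul_nonneg (sub_nonneg.2 hab) (by linarith : (0:ℝ) ≤ a + b)]
    have := Real.log_le_log (by positivity) key
    rw [Real.log_mul (ne_of_gt hb) (ne_of_gt (hp2 d)),
      Real.log_mul (ne_of_gt ha) (ne_of_gt (hp1 d))] at this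
    simp only [hf_def]
    linarith
  have hhigh : ∀ d : ℝ, f d ≤ d + (Real.log a - Real.log b) := by
    intro d
    have key : b * (b * Real.exp d + a) ≤ a * (a * Real.exp d + b) := by
      nlinarith [mul_nonneg (mul_nonneg (sub_nonneg.2 hab) (by linarith : (0:ℝ) ≤ a + b))
        (Real.exp_pos d).le]
    have := Real.log_le_log (by positivity) key
    rw [Real.log_mul (ne_of_gt hb) (ne_of_gt (hp1 d)),
      Real.log_mul (ne_of_gt ha) (ne_of_gt (hp2 d))] at this
    simp only [hf_def]
    linarith
  have htop : Filter.Tendsto f Filter.atTop Filter.atTop :=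
    Filter.tendsto_atTop_mono hlow
      (Filter.tendsto_atTop_add_const_right _ _ Filter.tendsto_id)
  have hbot : Filter.Tendsto f Filter.atBot Filter.atBot :=
    Filter.tendsto_atBot_mono hhigh
      (Filter.tendsto_atBot_add_const_right _ _ Filter.tendsto_id)
  have hsurj : Function.Surjective f := Continuous.surjective hcont htop hbot
  have hbij : Function.Bijective f := ⟨hmono.injective, hsurj⟩
  rw [hfun]
  refine ⟨hmono, hbij, fun dhat => ?_⟩
  obtain ⟨d, hd⟩ := hsurj dhat
  exact ⟨d, (congrFun hfun d).trans hd,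
    fun y hy => hmono.injective (((congrFun hfun y).symm.trans hy).trans hd.symm)⟩
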